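/- arXiv:2410.17043 — 6 statements merged into one kernel-verified Lean document; each statement's English description precedes it below -/
import Mathlib

section
/- Let n ≥ 1 and let D be an n×n matrix with nonnegative real entries, and let b = max( max over rows i of the i-th row sum of D, max over columns j of the j-th column sum of D ). Then there exist finitely many nonnegative reals λ_1,…,λ_m and subpermutation matrices M_1,…,M_m such that D = ∑_{k=1}^m λ_k · M_k and ∑_{k=1}^m λ_k = b. -/
/-- A subpermutation matrix: entries in {0,1}, at most one 1 in each row and column. -/
def IsSubPermMatrix {n : ℕ} (M : Matrix (Fin n) (Fin n) ℝ) : Prop :=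
  (∀ i j, M i j = 0 ∨ M i j = 1) ∧ (∀ i, ∑ j, M i j ≤ 1) ∧ (∀ j, ∑ i, M i j ≤ 1)

theorem decomposition_achieving_bmax (n : ℕ) (hn : 1 ≤ n)
    (D : Matrix (Fin n) (Fin n) ℝ) (hD : ∀ i j, 0 ≤ D i j)
    (b : ℝ)
    (hb : b = max
      (Finset.univ.sup' (Finset.univ_nonempty_iff.mpr ⟨⟨0, hn⟩⟩) fun i => ∑ j, D i j)
      (Finset.univ.sup' (Finset.univ_nonempty_iff.mpr ⟨⟨0, hn⟩⟩) fun j => ∑ i, D i j)) :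
    ∃ (m : ℕ) (lam : Fin m → ℝ) (M : Fin m → Matrix (Fin n) (Fin n) ℝ),
      (∀ k, 0 ≤ lam k) ∧ (∀ k, IsSubPermMatrix (M k)) ∧
      D = ∑ k, lam k • M k ∧ ∑ k, lam k = b := by
  classical
  have hne : (Finset.univ : Finset (Fin n)).Nonempty := Finset.univ_nonempty_iff.mpr ⟨⟨0, hn⟩⟩
  -- row and column sums are ≤ b
  have hrow : ∀ i, ∑ j, D i j ≤ b := by
    intro i
    rw [hb]
    exact le_max_of_le_left (Finset.le_sup' (fun i => ∑ j, D i j) (Finset.mem_univ i))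
  have hcol : ∀ j, ∑ i, D i j ≤ b := by
    intro j
    rw [hb]
    exact le_max_of_le_right (Finset.le_sup' (fun j => ∑ i, D i j) (Finset.mem_univ j))
  have hb0 : 0 ≤ b := le_trans (Finset.sum_nonneg fun j _ => hD ⟨0, hn⟩ j) (hrow ⟨0, hn⟩)
  rcases eq_or_lt_of_le hb0 with hb0' | hbpos
  · -- b = 0, so D = 0
    have hDzero : D = 0 := by
      ext i j
      have h1 : D i j ≤ ∑ k, D i k :=
        Finset.single_le_sum (fun k _ => hD i k) (Finset.mem_univ j)
      have h2 := le_trans h1 (hrow i)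
      have h3 := hD i j
      simp only [Matrix.zero_apply]
      linarith
    exact ⟨0, fun k => 0, fun k => 0, fun k => le_refl 0, fun k => k.elim0,
      by simp [hDzero], by simp [← hb0']⟩
  · -- b > 0
    set E : Matrix (Fin n ⊕ Fin n) (Fin n ⊕ Fin n) ℝ := fun p q =>
      match p, q with
      | Sum.inl i, Sum.inl j => D i j / b
      | Sum.inl i, Sum.inr j => if i = j then 1 - (∑ k, D i k) / b else 0
      | Sum.inr i, Sum.inl j => if j = i then 1 - (∑ k, D k j) / b else 0
      | Sum.inr i, Sum.inr j => D j i / b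
      with hE
    have hbne : b ≠ 0 := ne_of_gt hbpos
    have hEmem : E ∈ doublyStochastic ℝ (Fin n ⊕ Fin n) := by
      rw [mem_doublyStochastic_iff_sum]
      refine ⟨?_, ?_, ?_⟩
      · rintro (i | i) (j | j) <;> simp only [hE]
        · exact div_nonneg (hD i j) hb0
        · split
          · have := hrow i
            have : (∑ k, D i k) / b ≤ 1 := (div_le_one hbpos).2 this
            linarith
          · exact le_refl 0
        · split
          · have := hcol j
            have : (∑ k, D k j) / b ≤ 1 := (div_le_one hbpos).2 this
            linarith
          · exact le_refl 0
        · exact div_nonneg (hD j i) hb0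
      · rintro (i | i)
        · rw [Fintype.sum_sum_type]
          have h1 : ∑ j, E (Sum.inl i) (Sum.inl j) = (∑ j, D i j) / b := by
            simp only [hE]; rw [Finset.sum_div]
          have h2 : ∑ j, E (Sum.inl i) (Sum.inr j) = 1 - (∑ k, D i k) / b := by
            simp [hE, Finset.sum_ite_eq]
          rw [h1, h2]; ring
        · rw [Fintype.sum_sum_type]
          have h1 : ∑ j, E (Sum.inr i) (Sum.inl j) = 1 - (∑ k, D k i) / b := by
            simp [hE, Finset.sum_ite_eq']
          have h2 : ∑ j, E (Sum.inr i) (Sum.inr j) = (∑ j, D j i) / b := by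
            simp only [hE]; rw [Finset.sum_div]
          rw [h1, h2]; ring
      · rintro (j | j)
        · rw [Fintype.sum_sum_type]
          have h1 : ∑ i, E (Sum.inl i) (Sum.inl j) = (∑ i, D i j) / b := by
            simp only [hE]; rw [Finset.sum_div]
          have h2 : ∑ i, E (Sum.inr i) (Sum.inl j) = 1 - (∑ k, D k j) / b := by
            simp [hE, Finset.sum_ite_eq]
          rw [h1, h2]; ring
        · rw [Fintype.sum_sum_type]
          have h1 : ∑ i, E (Sum.inl i) (Sum.inr j) = 1 - (∑ k, D j k) / b := by
            simp [hE, Finset.sum_ite_eq']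
          have h2 : ∑ i, E (Sum.inr i) (Sum.inr j) = (∑ i, D j i) / b := by
            simp only [hE]; rw [Finset.sum_div]
          rw [h1, h2]; ring
    obtain ⟨w, hw0, hw1, hwE⟩ := exists_eq_sum_perm_of_mem_doublyStochastic hEmem
    set m := Fintype.card (Equiv.Perm (Fin n ⊕ Fin n)) with hm
    set e : Fin m ≃ Equiv.Perm (Fin n ⊕ Fin n) := (Fintype.equivFin _).symm with he
    refine ⟨m, fun k => b * w (e k),
      fun k i j => (Equiv.Perm.permMatrix ℝ (e k)) (Sum.inl i) (Sum.inl j), ?_, ?_, ?_, ?_⟩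
    · intro k
      exact mul_nonneg hb0 (hw0 _)
    · intro k
      set σ := e k
      refine ⟨?_, ?_, ?_⟩
      · intro i j
        simp only [Equiv.Perm.permMatrix, PEquiv.toMatrix_apply, Equiv.toPEquiv_apply]
        split_ifs <;> simp <;> tauto
      · intro i
        have hnn : ∀ q : Fin n ⊕ Fin n, (0:ℝ) ≤ (σ.permMatrix ℝ) (Sum.inl i) q := by
          intro q
          simp only [Equiv.Perm.permMatrix, PEquiv.toMatrix_apply, Equiv.toPEquiv_apply]
          split_ifs <;> simp <;> split_ifs <;> simp
        have h1 : ∑ j : Fin n, (σ.permMatrix ℝ) (Sum.inl i) (Sum.inl j)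
            ≤ ∑ q : Fin n ⊕ Fin n, (σ.permMatrix ℝ) (Sum.inl i) q := by
          rw [Fintype.sum_sum_type]
          have : (0:ℝ) ≤ ∑ j : Fin n, (σ.permMatrix ℝ) (Sum.inl i) (Sum.inr j) :=
            Finset.sum_nonneg fun j _ => hnn _
          linarith
        have h2 : ∑ q : Fin n ⊕ Fin n, (σ.permMatrix ℝ) (Sum.inl i) q = 1 :=
          sum_row_of_mem_doublyStochastic (permMatrix_mem_doublyStochastic) _
        linarith
      · intro j
        have hnn : ∀ q : Fin n ⊕ Fin n, (0:ℝ) ≤ (σ.permMatrix ℝ) q (Sum.inl j) := by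
          intro q
          simp only [Equiv.Perm.permMatrix, PEquiv.toMatrix_apply, Equiv.toPEquiv_apply]
          split_ifs <;> simp <;> split_ifs <;> simp
        have h1 : ∑ i : Fin n, (σ.permMatrix ℝ) (Sum.inl i) (Sum.inl j)
            ≤ ∑ q : Fin n ⊕ Fin n, (σ.permMatrix ℝ) q (Sum.inl j) := by
          rw [Fintype.sum_sum_type]
          have : (0:ℝ) ≤ ∑ i : Fin n, (σ.permMatrix ℝ) (Sum.inr i) (Sum.inl j) :=
            Finset.sum_nonneg fun i _ => hnn _
          linarith
        have h2 : ∑ q : Fin n ⊕ Fin n, (σ.permMatrix ℝ) q (Sum.inl j) = 1 :=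
          sum_col_of_mem_doublyStochastic (permMatrix_mem_doublyStochastic) _
        linarith
    · ext i j
      have hEij : E (Sum.inl i) (Sum.inl j) = D i j / b := rfl
      have h1 : (∑ σ : Equiv.Perm (Fin n ⊕ Fin n), w σ • σ.permMatrix ℝ)
          (Sum.inl i) (Sum.inl j) = D i j / b := by rw [hwE, hEij]
      rw [Matrix.sum_apply] at h1
      simp only [Matrix.smul_apply, smul_eq_mul] at h1
      rw [Matrix.sum_apply]
      simp only [Finset.sum_apply, Matrix.smul_apply, Pi.smul_apply, smul_eq_mul]
      change D i j = ∑ x, b * w (e x) * Equiv.Perm.permMatrix ℝ (e x) (Sum.inl i) (Sum.inl j)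
      rw [Equiv.sum_comp e
        (fun σ => b * w σ * (σ.permMatrix ℝ) (Sum.inl i) (Sum.inl j))]
      have h3 : ∑ σ : Equiv.Perm (Fin n ⊕ Fin n),
          b * w σ * (σ.permMatrix ℝ) (Sum.inl i) (Sum.inl j)
          = b * ∑ σ : Equiv.Perm (Fin n ⊕ Fin n),
            w σ * (σ.permMatrix ℝ) (Sum.inl i) (Sum.inl j) := by
        rw [Finset.mul_sum]
        exact Finset.sum_congr rfl fun σ _ => by ring
      rw [h3, h1]
      field_simp
    · rw [← Finset.mul_sum]
      rw [Equiv.sum_comp e w, hw1, mul_one]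
end

section
/- Let n ≥ 1 and let D be an n×n matrix with nonnegative real entries, and let b = max( max over rows i of the i-th row sum of D, max over columns j of the j-th column sum of D ). Then there exists an n×n matrix X with nonnegative real entries such that every row sum and every column sum of D + X equals b. (Step 1 of the proof of Theorem 4.2: the traffic matrix can be completed to a doubly balanced matrix by adding artificial traffic.) -/
theorem complete_to_doubly_balanced (n : ℕ) (hn : 1 ≤ n)
    (D : Matrix (Fin n) (Fin n) ℝ) (hD : ∀ i j, 0 ≤ D i j)
    (b : ℝ)
    (hb : b = max
      (Finset.univ.sup' (Finset.univ_nonempty_iff.mpr ⟨⟨0, hn⟩⟩) fun i => ∑ j, D i j)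
      (Finset.univ.sup' (Finset.univ_nonempty_iff.mpr ⟨⟨0, hn⟩⟩) fun j => ∑ i, D i j)) :
    ∃ X : Matrix (Fin n) (Fin n) ℝ,
      (∀ i j, 0 ≤ X i j) ∧
      (∀ i, ∑ j, (D + X) i j = b) ∧
      (∀ j, ∑ i, (D + X) i j = b) := by
  set r : Fin n → ℝ := fun i => ∑ j, D i j with hr
  set c : Fin n → ℝ := fun j => ∑ i, D i j with hc
  have hbr : ∀ i, r i ≤ b := by
    intro i
    rw [hb]
    exact le_max_of_le_left (Finset.le_sup' _ (Finset.mem_univ i))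
  have hbc : ∀ j, c j ≤ b := by
    intro j
    rw [hb]
    exact le_max_of_le_right (Finset.le_sup' _ (Finset.mem_univ j))
  set t : ℝ := ∑ i, (b - r i) with ht
  have ht' : t = ∑ j, (b - c j) := by
    rw [ht]
    simp only [Finset.sum_sub_distrib, hr, hc]
    congr 1
    exact Finset.sum_comm
  have htnn : 0 ≤ t := Finset.sum_nonneg fun i _ => sub_nonneg.2 (hbr i)
  rcases eq_or_lt_of_le htnn with heq | hpos
  · -- t = 0 : all row and column sums equal b
    have hrall : ∀ i, b - r i = 0 := by
      intro i
      have := (Finset.sum_eq_zero_iff_of_nonneg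
        (fun i _ => sub_nonneg.2 (hbr i))).1 heq.symm
      exact this i (Finset.mem_univ i)
    have hcall : ∀ j, b - c j = 0 := by
      intro j
      have := (Finset.sum_eq_zero_iff_of_nonneg
        (fun j _ => sub_nonneg.2 (hbc j))).1 (ht'.symm.trans heq.symm)
      exact this j (Finset.mem_univ j)
    refine ⟨0, fun i j => le_refl 0, ?_, ?_⟩
    · intro i
      simp only [add_zero]
      have := hrall i
      linarith [hrall i]
    · intro j
      simp only [add_zero]
      linarith [hcall j]
  · refine ⟨fun i j => (b - r i) * (b - c j) / t, ?_, ?_, ?_⟩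
    · intro i j
      exact div_nonneg (mul_nonneg (sub_nonneg.2 (hbr i)) (sub_nonneg.2 (hbc j))) htnn
    · intro i
      have : ∑ j, ((b - r i) * (b - c j) / t) = b - r i := by
        rw [← Finset.sum_div, ← Finset.mul_sum, ← ht', mul_div_assoc,
          div_self (ne_of_gt hpos), mul_one]
      show ∑ j, (D i j + (b - r i) * (b - c j) / t) = b
      rw [Finset.sum_add_distrib, this]
      show r i + (b - r i) = b
      ring
    · intro j
      have : ∑ i, ((b - r i) * (b - c j) / t) = b - c j := by
        rw [← Finset.sum_div, ← Finset.sum_mul, ← ht, mul_comm, mul_div_assoc,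
          div_self (ne_of_gt hpos), mul_one]
      show ∑ i, (D i j + (b - r i) * (b - c j) / t) = b
      rw [Finset.sum_add_distrib, this]
      show c j + (b - c j) = b
      ring
end

section
/- Let n ≥ 1, let a : Fin n → ℝ be nonnegative and nonincreasing (a(i) ≥ a(j) whenever i ≤ j), and let s : Fin n → ℝ be strictly positive and nonincreasing (s(i) ≥ s(j) whenever i ≤ j). Then for every permutation σ of Fin n, max_{i} ( a(i) / s(i) ) ≤ max_{i} ( a(i) / s(σ(i)) ). (Theorem 5.1: sorting experts by token load in descending order and assigning them to GPUs in descending order of performance minimizes the maximum per-GPU time.) -/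
theorem sorted_assignment_minimizes_max_time (n : ℕ) (hn : 1 ≤ n)
    (a s : Fin n → ℝ)
    (ha0 : ∀ i, 0 ≤ a i) (ha : ∀ i j : Fin n, i ≤ j → a j ≤ a i)
    (hs0 : ∀ i, 0 < s i) (hs : ∀ i j : Fin n, i ≤ j → s j ≤ s i)
    (σ : Equiv.Perm (Fin n)) :
    (Finset.univ.sup' (Finset.univ_nonempty_iff.mpr ⟨⟨0, hn⟩⟩) fun i => a i / s i)
      ≤ Finset.univ.sup' (Finset.univ_nonempty_iff.mpr ⟨⟨0, hn⟩⟩) fun i => a i / s (σ i) := by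
  apply Finset.sup'_le
  intro i _
  -- pigeonhole: some j ≤ i with i ≤ σ j
  have : ∃ j : Fin n, j ≤ i ∧ i ≤ σ j := by
    by_contra h
    push_neg at h
    have hmap : ∀ j ∈ Finset.Iic i, σ j ∈ Finset.Iio i := by
      intro j hj
      simp only [Finset.mem_Iic] at hj
      exact Finset.mem_Iio.mpr (h j hj)
    have hcard := Finset.card_le_card_of_injOn σ hmap
      (σ.injective.injOn)
    simp [Fin.card_Iic, Fin.card_Iio] at hcard
  obtain ⟨j, hji, hij⟩ := this
  refine le_trans ?_ (Finset.le_sup' (fun i => a i / s (σ i)) (Finset.mem_univ j))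
  exact div_le_div₀ (ha0 j) (ha j i hji) (hs0 (σ j)) (hs i (σ j) hij)
end

section
/- Let n ≥ 1, let D be an n×n matrix with nonnegative real entries d_{ij}, and let B : Fin n → ℝ be strictly positive (the per-GPU bandwidths). Define the time matrix E by E_{ij} = d_{ij} / B(i), and let b = max( max over rows i of the i-th row sum of E, max over columns j of the j-th column sum of E ). Then the minimum of ∑_k λ_k over all finite decompositions E = ∑_k λ_k · M_k, where each λ_k is a nonnegative real and each M_k is a subpermutation matrix, is exactly b. (Theorem 5.2: in a heterogeneous cluster the minimum all-to-all communication time equals the longest per-GPU sending or receiving time, and the contention-free transmission order remains optimal.) -/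
theorem min_comm_time_heterogeneous (n : ℕ) (hn : 1 ≤ n)
    (D : Matrix (Fin n) (Fin n) ℝ) (hD : ∀ i j, 0 ≤ D i j)
    (B : Fin n → ℝ) (hB : ∀ i, 0 < B i)
    (E : Matrix (Fin n) (Fin n) ℝ) (hE : ∀ i j, E i j = D i j / B i) :
    IsLeast
      {t : ℝ | ∃ (m : ℕ) (lam : Fin m → ℝ) (M : Fin m → Matrix (Fin n) (Fin n) ℝ),
        (∀ k, 0 ≤ lam k) ∧ (∀ k, IsSubPermMatrix (M k)) ∧
        E = ∑ k, lam k • M k ∧ t = ∑ k, lam k}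
      (max
        (Finset.univ.sup' (Finset.univ_nonempty_iff.mpr ⟨⟨0, hn⟩⟩) fun i => ∑ j, E i j)
        (Finset.univ.sup' (Finset.univ_nonempty_iff.mpr ⟨⟨0, hn⟩⟩) fun j => ∑ i, E i j)) := by
  have hne : (Finset.univ : Finset (Fin n)).Nonempty := Finset.univ_nonempty_iff.mpr ⟨⟨0, hn⟩⟩
  have hE0 : ∀ i j, 0 ≤ E i j := fun i j => by
    rw [hE]; exact div_nonneg (hD i j) (hB i).le
  set R : Fin n → ℝ := fun i => ∑ j, E i j with hR
  set C : Fin n → ℝ := fun j => ∑ i, E i j with hC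
  set b : ℝ := max (Finset.univ.sup' hne R) (Finset.univ.sup' hne C) with hb
  have hRb : ∀ i, R i ≤ b := fun i =>
    le_max_of_le_left (Finset.le_sup' _ (Finset.mem_univ i))
  have hCb : ∀ j, C j ≤ b := fun j =>
    le_max_of_le_right (Finset.le_sup' _ (Finset.mem_univ j))
  have hb0 : 0 ≤ b := le_trans (Finset.sum_nonneg fun j _ => hE0 ⟨0, hn⟩ j) (hRb ⟨0, hn⟩)
  constructor
  · -- membership: construct a decomposition of total weight b
    rcases eq_or_lt_of_le hb0 with hbz | hbpos
    · -- b = 0 : E = 0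
      have hEz : E = 0 := by
        ext i j
        have h1 : E i j ≤ R i := Finset.single_le_sum (fun k _ => hE0 i k) (Finset.mem_univ j)
        have := (h1.trans (hRb i)).trans_eq hbz.symm
        exact le_antisymm this (hE0 i j)
      exact ⟨0, fun k => 0, fun k => 0, fun k => k.elim0, fun k => k.elim0,
        by simp [hEz], by simp [← hbz]⟩
    · -- b > 0
      set G : Matrix (Fin n ⊕ Fin n) (Fin n ⊕ Fin n) ℝ := fun p q =>
        match p, q with
        | .inl i, .inl j => E i j
        | .inl i, .inr j => if i = j then b - R i else 0
        | .inr i, .inl j => if i = j then b - C i else 0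
        | .inr i, .inr j => E j i
        with hG
      have hGrow : ∀ p, ∑ q, G p q = b := by
        rintro (i | i)
        · rw [Fintype.sum_sum_type]
          have h1 : ∑ j, G (Sum.inl i) (Sum.inl j) = R i := rfl
          have h2 : ∑ j, G (Sum.inl i) (Sum.inr j) = b - R i := by
            simp only [show ∀ j, G (Sum.inl i) (Sum.inr j)
              = if i = j then b - R i else 0 from fun _ => rfl]
            simp
          rw [h1, h2]; ring
        · rw [Fintype.sum_sum_type]
          have h1 : ∑ j, G (Sum.inr i) (Sum.inl j) = b - C i := by
            simp only [show ∀ j, G (Sum.inr i) (Sum.inl j)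
              = if i = j then b - C i else 0 from fun _ => rfl]
            simp
          have h2 : ∑ j, G (Sum.inr i) (Sum.inr j) = C i := rfl
          rw [h1, h2]; ring
      have hGcol : ∀ q, ∑ p, G p q = b := by
        rintro (j | j)
        · rw [Fintype.sum_sum_type]
          have h1 : ∑ i, G (Sum.inl i) (Sum.inl j) = C j := rfl
          have h2 : ∑ i, G (Sum.inr i) (Sum.inl j) = b - C j := by
            simp only [show ∀ i, G (Sum.inr i) (Sum.inl j)
              = if i = j then b - C i else 0 from fun _ => rfl]
            simp
          rw [h1, h2]; ring
        · rw [Fintype.sum_sum_type]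
          have h1 : ∑ i, G (Sum.inl i) (Sum.inr j) = b - R j := by
            simp only [show ∀ i, G (Sum.inl i) (Sum.inr j)
              = if i = j then b - R i else 0 from fun _ => rfl]
            simp
          have h2 : ∑ i, G (Sum.inr i) (Sum.inr j) = R j := rfl
          rw [h1, h2]; ring
      have hGnn : ∀ p q, 0 ≤ G p q := by
        rintro (i | i) (j | j)
        · exact hE0 i j
        · show (0:ℝ) ≤ if i = j then b - R i else 0
          split
          · linarith [hRb i]
          · exact le_refl 0
        · show (0:ℝ) ≤ if i = j then b - C i else 0
          split
          · linarith [hCb i]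
          · exact le_refl 0
        · exact hE0 j i
      have hmem : b⁻¹ • G ∈ doublyStochastic ℝ (Fin n ⊕ Fin n) := by
        rw [mem_doublyStochastic_iff_sum]
        refine ⟨fun i j => mul_nonneg (inv_nonneg.mpr hb0) (hGnn i j), fun i => ?_, fun j => ?_⟩
        · simp only [Matrix.smul_apply, smul_eq_mul, ← Finset.mul_sum, hGrow]
          field_simp
        · simp only [Matrix.smul_apply, smul_eq_mul, ← Finset.mul_sum, hGcol]
          field_simp
      obtain ⟨w, hw0, hw1, hwG⟩ :=
        exists_eq_sum_perm_of_mem_doublyStochastic hmem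
      have hGsum : ∀ p q, G p q = ∑ σ : Equiv.Perm (Fin n ⊕ Fin n),
          (b * w σ) * (σ.permMatrix ℝ) p q := by
        intro p q
        have := congrFun (congrFun hwG p) q
        simp only [Matrix.sum_apply, Matrix.smul_apply, smul_eq_mul] at this
        have hb' : b ≠ 0 := ne_of_gt hbpos
        calc G p q = b * (b⁻¹ * G p q) := by field_simp
          _ = b * ∑ σ : Equiv.Perm (Fin n ⊕ Fin n), w σ * (σ.permMatrix ℝ) p q := by
              rw [← this]
          _ = _ := by rw [Finset.mul_sum]; congr 1; ext σ; ring
      -- transfer to Fin m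
      set m := Fintype.card (Equiv.Perm (Fin n ⊕ Fin n)) with hm
      obtain ⟨e⟩ : Nonempty (Fin m ≃ Equiv.Perm (Fin n ⊕ Fin n)) :=
        ⟨(Fintype.equivFin _).symm⟩
      refine ⟨m, fun k => b * w (e k), fun k i j => (e k).permMatrix ℝ (.inl i) (.inl j),
        fun k => mul_nonneg hb0 (hw0 _), fun k => ?_, ?_, ?_⟩
      · refine ⟨fun i j => ?_, fun i => ?_, fun j => ?_⟩
        · simp only [Equiv.Perm.permMatrix, PEquiv.toMatrix_apply]
          split <;> simp
        · have h1 : ∑ q, (e k).permMatrix ℝ (.inl i) q = 1 :=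
            sum_row_of_mem_doublyStochastic
              permMatrix_mem_doublyStochastic _
          calc ∑ j, (e k).permMatrix ℝ (.inl i) (.inl j)
              ≤ ∑ q, (e k).permMatrix ℝ (.inl i) q := by
                rw [Fintype.sum_sum_type]
                have : ∀ q, (0:ℝ) ≤ (e k).permMatrix ℝ (.inl i) q := fun q =>
                  nonneg_of_mem_doublyStochastic
                    permMatrix_mem_doublyStochastic
                nlinarith [Finset.sum_nonneg (fun j (_ : j ∈ Finset.univ) =>
                  this (Sum.inr j))]
            _ = 1 := h1
        · have h1 : ∑ p, (e k).permMatrix ℝ p (.inl j) = 1 :=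
            sum_col_of_mem_doublyStochastic
              permMatrix_mem_doublyStochastic _
          calc ∑ i, (e k).permMatrix ℝ (.inl i) (.inl j)
              ≤ ∑ p, (e k).permMatrix ℝ p (.inl j) := by
                rw [Fintype.sum_sum_type]
                have : ∀ p, (0:ℝ) ≤ (e k).permMatrix ℝ p (.inl j) := fun p =>
                  nonneg_of_mem_doublyStochastic
                    permMatrix_mem_doublyStochastic
                nlinarith [Finset.sum_nonneg (fun i (_ : i ∈ Finset.univ) =>
                  this (Sum.inr i))]
            _ = 1 := h1
      · ext i j
        calc E i j
            = ∑ σ : Equiv.Perm (Fin n ⊕ Fin n),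
                b * w σ * (σ.permMatrix ℝ) (Sum.inl i) (Sum.inl j) := hGsum (Sum.inl i) (Sum.inl j)
          _ = ∑ k : Fin m, b * w (e k) * ((e k).permMatrix ℝ) (Sum.inl i) (Sum.inl j) :=
              (Equiv.sum_comp e fun σ =>
                b * w σ * (σ.permMatrix ℝ) (Sum.inl i) (Sum.inl j)).symm
          _ = _ := by simp only [Matrix.sum_apply, Matrix.smul_apply, smul_eq_mul]; rfl
      · rw [← Finset.mul_sum, Equiv.sum_comp e w, hw1, mul_one]
  · -- lower bound
    rintro t ⟨m, lam, M, hlam, hM, hEd, ht⟩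
    have key : ∀ i, R i ≤ t := by
      intro i
      have : R i = ∑ k, lam k * ∑ j, M k i j := by
        simp only [hR, hEd, Matrix.sum_apply, Matrix.smul_apply, smul_eq_mul]
        rw [Finset.sum_comm]
        congr 1; ext k; rw [Finset.mul_sum]
      rw [this, ht]
      refine Finset.sum_le_sum fun k _ => ?_
      calc lam k * ∑ j, M k i j ≤ lam k * 1 :=
            mul_le_mul_of_nonneg_left ((hM k).2.1 i) (hlam k)
        _ = lam k := mul_one _
    have key' : ∀ j, C j ≤ t := by
      intro j
      have : C j = ∑ k, lam k * ∑ i, M k i j := by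
        simp only [hC, hEd, Matrix.sum_apply, Matrix.smul_apply, smul_eq_mul]
        rw [Finset.sum_comm]
        congr 1; ext k; rw [Finset.mul_sum]
      rw [this, ht]
      refine Finset.sum_le_sum fun k _ => ?_
      calc lam k * ∑ i, M k i j ≤ lam k * 1 :=
            mul_le_mul_of_nonneg_left ((hM k).2.2 j) (hlam k)
        _ = lam k := mul_one _
    exact max_le (Finset.sup'_le _ _ fun i _ => key i) (Finset.sup'_le _ _ fun j _ => key' j)
end

section
/- Let n ≥ 1, let D be an n×n matrix with nonnegative real entries d_{ij}, let B : Fin n → ℝ be strictly positive, and let b = max( max_i ∑_{j} d_{ij}/B(i) , max_j ∑_{i} d_{ij}/B(i) ). Then there exists an n×n matrix X with nonnegative real entries such that for every row i, ∑_{j} (d_{ij} + x_{ij})/B(i) = b, and for every column j, ∑_{i} (d_{ij} + x_{ij})/B(i) = b. (Step 1 of the proof of Theorem 5.2: the heterogeneous traffic matrix can be completed by artificial traffic so that every GPU spends exactly time b sending and receiving.) -/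
theorem complete_to_balanced_heterogeneous (n : ℕ) (hn : 1 ≤ n)
    (D : Matrix (Fin n) (Fin n) ℝ) (hD : ∀ i j, 0 ≤ D i j)
    (B : Fin n → ℝ) (hB : ∀ i, 0 < B i)
    (b : ℝ)
    (hb : b = max
      (Finset.univ.sup' (Finset.univ_nonempty_iff.mpr ⟨⟨0, hn⟩⟩) fun i => ∑ j, D i j / B i)
      (Finset.univ.sup' (Finset.univ_nonempty_iff.mpr ⟨⟨0, hn⟩⟩) fun j => ∑ i, D i j / B i)) :
    ∃ X : Matrix (Fin n) (Fin n) ℝ,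
      (∀ i j, 0 ≤ X i j) ∧
      (∀ i, ∑ j, (D i j + X i j) / B i = b) ∧
      (∀ j, ∑ i, (D i j + X i j) / B i = b) := by
  set r : Fin n → ℝ := fun i => ∑ j, D i j / B i with hr
  set c : Fin n → ℝ := fun j => ∑ i, D i j / B i with hc
  have hne : (Finset.univ : Finset (Fin n)).Nonempty := Finset.univ_nonempty_iff.mpr ⟨⟨0, hn⟩⟩
  have hbr : ∀ i, r i ≤ b := by
    intro i
    rw [hb]
    exact le_max_of_le_left (Finset.le_sup' _ (Finset.mem_univ i))
  have hbc : ∀ j, c j ≤ b := by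
    intro j
    rw [hb]
    exact le_max_of_le_right (Finset.le_sup' _ (Finset.mem_univ j))
  set δ : Fin n → ℝ := fun i => b - r i with hδ
  set ε : Fin n → ℝ := fun j => b - c j with hε
  have hδ0 : ∀ i, 0 ≤ δ i := fun i => sub_nonneg.mpr (hbr i)
  have hε0 : ∀ j, 0 ≤ ε j := fun j => sub_nonneg.mpr (hbc j)
  set S : ℝ := ∑ i, δ i with hS
  have hSε : ∑ j, ε j = S := by
    have hsum : ∑ i, r i = ∑ j, c j := by
      simp only [hr, hc]
      exact Finset.sum_comm
    simp only [hS, hδ, hε, Finset.sum_sub_distrib, hsum]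
  have hS0 : 0 ≤ S := Finset.sum_nonneg fun i _ => hδ0 i
  refine ⟨fun i j => B i * (δ i * ε j / S), ?_, ?_, ?_⟩
  · intro i j
    exact mul_nonneg (hB i).le (div_nonneg (mul_nonneg (hδ0 i) (hε0 j)) hS0)
  · intro i
    have hBi := (hB i).ne'
    have h1 : ∀ j, (D i j + B i * (δ i * ε j / S)) / B i = D i j / B i + δ i * ε j / S := by
      intro j; rw [add_div, mul_div_cancel_left₀ _ hBi]
    have : ∑ j, (D i j + B i * (δ i * ε j / S)) / B i
        = r i + δ i * S / S := by
      simp only [h1]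
      rw [Finset.sum_add_distrib]
      congr 1
      rw [← Finset.sum_div, ← Finset.mul_sum, hSε]
    rw [this]
    by_cases hSz : S = 0
    · have : δ i = 0 :=
        (Finset.sum_eq_zero_iff_of_nonneg (fun i _ => hδ0 i)).mp hSz i (Finset.mem_univ i)
      simp [hSz, hδ] at this ⊢
      linarith
    · rw [mul_div_assoc, div_self hSz, mul_one, hδ]; ring
  · intro j
    have h1 : ∀ i, (D i j + B i * (δ i * ε j / S)) / B i = D i j / B i + δ i * ε j / S := by
      intro i; rw [add_div, mul_div_cancel_left₀ _ (hB i).ne']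
    have heq : ∑ i, (D i j + B i * (δ i * ε j / S)) / B i
        = c j + S * ε j / S := by
      simp only [h1]
      rw [Finset.sum_add_distrib]
      congr 1
      rw [← Finset.sum_div, ← Finset.sum_mul]
    rw [heq]
    by_cases hSz : S = 0
    · have : ε j = 0 := by
        have h' : ∑ j, ε j = 0 := hSε.trans hSz
        exact (Finset.sum_eq_zero_iff_of_nonneg (fun j _ => hε0 j)).mp h' j (Finset.mem_univ j)
      simp [hSz, hε] at this ⊢
      linarith
    · rw [mul_comm, mul_div_assoc, div_self hSz, mul_one, hε]; ring
end

section
/- Let n ≥ 1 and let a, b : Fin n → ℝ with a nondecreasing (a(i) ≤ a(j) whenever i ≤ j) and b nonincreasing (b(i) ≥ b(j) whenever i ≤ j). Then for every permutation σ of Fin n, max_{i} ( a(i) + b(i) ) ≤ max_{i} ( a(i) + b(σ(i)) ). (Theorem 6.2: sorting one vector ascending and the other descending and pairing them sequentially minimizes the maximum pairwise sum, i.e., colocating a popular expert of one model with an unpopular expert of the other minimizes the maximum aggregated per-GPU traffic.) -/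
theorem opposite_sorting_minimizes_max_pair_sum (n : ℕ) (hn : 1 ≤ n)
    (a b : Fin n → ℝ)
    (ha : ∀ i j : Fin n, i ≤ j → a i ≤ a j)
    (hb : ∀ i j : Fin n, i ≤ j → b j ≤ b i)
    (σ : Equiv.Perm (Fin n)) :
    (Finset.univ.sup' (Finset.univ_nonempty_iff.mpr ⟨⟨0, hn⟩⟩) fun i => a i + b i)
      ≤ Finset.univ.sup' (Finset.univ_nonempty_iff.mpr ⟨⟨0, hn⟩⟩) fun i => a i + b (σ i) := by
  apply Finset.sup'_le
  intro i _
  -- pigeonhole: ∃ j ≥ i with σ j ≤ i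
  obtain ⟨j, hji, hσj⟩ : ∃ j : Fin n, i ≤ j ∧ σ j ≤ i := by
    by_contra h
    push_neg at h
    have hdisj : Disjoint ((Finset.Ici i).image σ) (Finset.Iic i) := by
      rw [Finset.disjoint_left]
      rintro x hx hx'
      obtain ⟨j, hj, rfl⟩ := Finset.mem_image.mp hx
      exact absurd (Finset.mem_Iic.mp hx') (not_le.mpr (h j (Finset.mem_Ici.mp hj)))
    have hcard := Finset.card_union_of_disjoint hdisj
    have h1 : ((Finset.Ici i).image σ).card = n - i := by
      rw [Finset.card_image_of_injective _ σ.injective, Fin.card_Ici]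
    have h2 : (Finset.Iic i).card = i + 1 := Fin.card_Iic i
    have h3 : (((Finset.Ici i).image σ) ∪ Finset.Iic i).card ≤ n := by
      calc _ ≤ (Finset.univ : Finset (Fin n)).card := Finset.card_le_card (Finset.subset_univ _)
        _ = n := Finset.card_fin n
    rw [hcard, h1, h2] at h3
    omega
  have : a i + b i ≤ a j + b (σ j) :=
    add_le_add (ha i j hji) (hb (σ j) i hσj)
  exact this.trans (Finset.le_sup' (fun i => a i + b (σ i)) (Finset.mem_univ j))
end
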